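/- Let γ ∈ (0,1) and define p_t(b) by p₁(b) = (γb/(γb+1))^γ and p_t(b) = [ p_{t-1}(γb+1) · γb / (γb + 1 - p_{t-1}(γb+1)) ]^γ. Then for every fixed b > 0 the sequence t ↦ p_t(b) is monotone nondecreasing. -/
import Mathlib

/-- Key inequality from Bernoulli: for `c > 0`, `0 < γ ≤ 1`,
`c/(c+1) ≤ (γc/(γc+1))^γ`. -/
lemma pgss_key (γ c : ℝ) (hγ0 : 0 < γ) (hγ1 : γ ≤ 1) (hc : 0 < c) :
    c / (c + 1) ≤ (γ * c / (γ * c + 1)) ^ γ := by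
  set a := γ * c with ha
  have hapos : 0 < a := mul_pos hγ0 hc
  have ha1 : 0 < a + 1 := by linarith
  have hc1 : 0 < c + 1 := by linarith
  -- Bernoulli: (1 + 1/a)^γ ≤ 1 + γ*(1/a) = 1 + 1/c
  have hbern : (1 + 1/a) ^ γ ≤ 1 + 1/c := by
    have hinv : (0:ℝ) < 1/a := by positivity
    have hma : (-1:ℝ) ≤ 1/a := by linarith
    have := rpow_one_add_le_one_add_mul_self (s := 1/a) hma hγ0.le hγ1
    have heq : γ * (1/a) = 1/c := by
      rw [ha]; field_simp
    linarith [this, heq ▸ this]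
  have hbase : a / (a + 1) = (1 + 1/a)⁻¹ := by field_simp
  have hc2 : c / (c + 1) = (1 + 1/c)⁻¹ := by field_simp
  rw [hbase, hc2]
  have h1 : (0:ℝ) < (1 + 1/a)⁻¹ := by positivity
  calc (1 + 1/c)⁻¹ ≤ ((1 + 1/a) ^ γ)⁻¹ := by
        apply inv_anti₀ (by positivity) hbern
    _ = (1 + 1/a)⁻¹ ^ γ := (Real.inv_rpow (by positivity) γ).symm

theorem pgss_p_mono_in_t (γ : ℝ) (hγ0 : 0 < γ) (hγ1 : γ < 1)
    (p : ℕ → ℝ → ℝ)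
    (h1 : ∀ b : ℝ, 0 < b → p 1 b = (γ * b / (γ * b + 1)) ^ γ)
    (hrec : ∀ t : ℕ, 1 ≤ t → ∀ b : ℝ, 0 < b →
      p (t + 1) b = (p t (γ * b + 1) * (γ * b) / (γ * b + 1 - p t (γ * b + 1))) ^ γ)
    (hbound : ∀ t : ℕ, 1 ≤ t → ∀ b : ℝ, 0 < b → 0 < p t b ∧ p t b < 1) :
    ∀ b : ℝ, 0 < b → ∀ t : ℕ, 1 ≤ t → p t b ≤ p (t + 1) b := by
  have main : ∀ t : ℕ, 1 ≤ t → ∀ b : ℝ, 0 < b → p t b ≤ p (t + 1) b := by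
    intro t ht
    induction t, ht using Nat.le_induction with
    | base =>
      intro b hb
      set m := γ * b with hm
      have hmpos : 0 < m := mul_pos hγ0 hb
      have hm1 : (0:ℝ) < m + 1 := by linarith
      set q := p 1 (γ * b + 1) with hq
      have hqb := hbound 1 le_rfl (γ * b + 1) (by linarith)
      have hq0 : 0 < q := hqb.1
      have hq1 : q < 1 := hqb.2
      -- q = (γ(m+1)/(γ(m+1)+1))^γ ≥ (m+1)/(m+2)
      have hqval : q = (γ * (γ * b + 1) / (γ * (γ * b + 1) + 1)) ^ γ :=
        h1 (γ * b + 1) (by linarith)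
      have hkey : (m + 1) / (m + 2) ≤ q := by
        rw [hqval]
        have := pgss_key γ (γ * b + 1) hγ0 hγ1.le (by linarith)
        convert this using 2 <;> rw [hm] <;> ring
      rw [h1 b hb, hrec 1 le_rfl b hb, ← hq, ← hm]
      apply Real.rpow_le_rpow (by positivity) _ hγ0.le
      rw [div_le_div_iff₀ hm1 (by linarith)]
      have h2 : (m + 1) ≤ q * (m + 2) := by
        rw [div_le_iff₀ (by linarith)] at hkey
        linarith
      nlinarith
    | succ t ht IH =>
      intro b hb
      have hmpos : 0 < γ * b := mul_pos hγ0 hb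
      have hc : (0:ℝ) < γ * b + 1 := by linarith
      set q1 := p t (γ * b + 1) with hq1d
      set q2 := p (t + 1) (γ * b + 1) with hq2d
      have hb1 := hbound t ht (γ * b + 1) hc
      have hb2 := hbound (t + 1) (by omega) (γ * b + 1) hc
      have A1 : 0 < q1 := hb1.1
      have A2 : q1 < 1 := hb1.2
      have B1 : 0 < q2 := hb2.1
      have B2 : q2 < 1 := hb2.2
      have hIH : q1 ≤ q2 := IH (γ * b + 1) hc
      rw [hrec t ht b hb, hrec (t + 1) (by omega) b hb, ← hq1d, ← hq2d]
      apply Real.rpow_le_rpow _ _ hγ0.le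
      · have h : 0 < γ * b + 1 - q1 := by linarith
        exact div_nonneg (mul_nonneg A1.le hmpos.le) h.le
      · rw [div_le_div_iff₀ (by linarith) (by linarith)]
        nlinarith [mul_le_mul_of_nonneg_right hIH (mul_pos hmpos hc).le]
  intro b hb t ht
  exact main t ht b hb
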